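/- Let f : ℝ → ℝ be differentiable and strictly convex with Bregman divergence D_f, let x_1 ≤ x_2 ≤ … ≤ x_n be real numbers, and let k ≥ 1. The optimal 1D Bregman k-clustering cost equals the optimal cost over interval partitions: min over all sets M = {μ_1, …, μ_k} ⊂ ℝ of at most k centroids of ∑_{ℓ=1}^{n} min_{μ ∈ M} D_f(x_ℓ, μ) equals the minimum over all partitions of {1, …, n} into at most k consecutive intervals of the sum of the Bregman cluster costs CC_f of the intervals. -/

import Mathlib

/-- The Bregman divergence induced by `f`: `D_f(x, y) = f x − f y − f'(y)(x − y)`. -/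
noncomputable def bregman (f : ℝ → ℝ) (x y : ℝ) : ℝ :=
  f x - f y - deriv f y * (x - y)

/-- The Bregman cluster cost of grouping `x_i, …, x_j` into one cluster with the
optimal centroid (the arithmetic mean); `0` when `i > j`. -/
noncomputable def bregmanClusterCost (f : ℝ → ℝ) (x : ℕ → ℝ) (i j : ℕ) : ℝ :=
  ∑ ℓ ∈ Finset.Icc i j,
    bregman f (x ℓ) ((∑ t ∈ Finset.Icc i j, x t) / ((Finset.Icc i j).card : ℝ))

/-- `bregmanKCost f x k m` is the minimum cost of partitioning `x_1, …, x_m`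
into at most `k` consecutive groups, each charged its Bregman cluster cost. -/
noncomputable def bregmanKCost (f : ℝ → ℝ) (x : ℕ → ℝ) (k m : ℕ) : ℝ :=
  sInf { c : ℝ | ∃ b : ℕ → ℕ, Monotone b ∧ b 0 = 0 ∧ b k = m ∧
    c = ∑ t ∈ Finset.range k, bregmanClusterCost f x (b t + 1) (b (t + 1)) }

lemma bregman_nonneg {f : ℝ → ℝ} (hdiff : Differentiable ℝ f)
    (hconv : StrictConvexOn ℝ Set.univ f) (x y : ℝ) : 0 ≤ bregman f x y := by
  rcases lt_trichotomy x y with h | h | h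
  · have hs := hconv.slope_lt_deriv (Set.mem_univ x) (Set.mem_univ y) h (hdiff y)
    rw [slope_def_field] at hs
    have hyx : (0:ℝ) < y - x := by linarith
    rw [div_lt_iff₀ hyx] at hs
    unfold bregman; nlinarith
  · simp [bregman, h]
  · have hs := hconv.deriv_lt_slope (Set.mem_univ y) (Set.mem_univ x) h (hdiff y)
    rw [slope_def_field] at hs
    have hxy : (0:ℝ) < x - y := by linarith
    rw [lt_div_iff₀ hxy] at hs
    unfold bregman; nlinarith

lemma deriv_strictMono' {f : ℝ → ℝ} (hdiff : Differentiable ℝ f)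
    (hconv : StrictConvexOn ℝ Set.univ f) : StrictMono (deriv f) := fun a b hab =>
  hconv.strictMonoOn_deriv (fun x _ => hdiff x) (Set.mem_univ a) (Set.mem_univ b) hab

lemma sum_bregman_mean_le {f : ℝ → ℝ} (h0 : ∀ a b : ℝ, 0 ≤ bregman f a b)
    (x : ℕ → ℝ) (s : Finset ℕ) (μ : ℝ) :
    ∑ ℓ ∈ s, bregman f (x ℓ) ((∑ t ∈ s, x t) / (s.card : ℝ)) ≤
      ∑ ℓ ∈ s, bregman f (x ℓ) μ := by
  rcases s.eq_empty_or_nonempty with rfl | hs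
  · simp
  · set m : ℝ := (∑ t ∈ s, x t) / (s.card : ℝ) with hm
    have hN : (0:ℝ) < (s.card : ℝ) := by
      exact_mod_cast Finset.card_pos.mpr hs
    have hsum : ∑ t ∈ s, x t = (s.card : ℝ) * m := by
      rw [hm]; field_simp
    have e1 : ∀ μ' : ℝ, ∑ ℓ ∈ s, bregman f (x ℓ) μ' =
        (∑ ℓ ∈ s, f (x ℓ)) - (s.card : ℝ) * f μ'
          - deriv f μ' * ((s.card : ℝ) * m - (s.card : ℝ) * μ') := by
      intro μ'
      unfold bregman
      rw [Finset.sum_sub_distrib, Finset.sum_sub_distrib, Finset.sum_const,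
        ← Finset.mul_sum, Finset.sum_sub_distrib, Finset.sum_const, hsum,
        nsmul_eq_mul, nsmul_eq_mul]
    rw [e1 μ, e1 m]
    have hb := h0 m μ
    unfold bregman at hb
    nlinarith [mul_nonneg hN.le hb]

lemma clusterCost_le {f : ℝ → ℝ} (h0 : ∀ a b : ℝ, 0 ≤ bregman f a b)
    (x : ℕ → ℝ) (i j : ℕ) (μ : ℝ) :
    bregmanClusterCost f x i j ≤ ∑ ℓ ∈ Finset.Icc i j, bregman f (x ℓ) μ :=
  sum_bregman_mean_le h0 x _ μ

lemma sum_Ioc_parts (h : ℕ → ℝ) (b : ℕ → ℕ) (hb : Monotone b) (k : ℕ) :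
    ∑ t ∈ Finset.range k, ∑ ℓ ∈ Finset.Ioc (b t) (b (t + 1)), h ℓ
      = ∑ ℓ ∈ Finset.Ioc (b 0) (b k), h ℓ := by
  induction k with
  | zero => simp
  | succ k ih =>
    rw [Finset.sum_range_succ, ih,
      Finset.sum_Ioc_consecutive _ (hb (Nat.zero_le k)) (hb (Nat.le_succ k))]

/-- argmin set -/
noncomputable def bestSet (f : ℝ → ℝ) (M : Finset ℝ) (v : ℝ) : Finset ℝ :=
  M.filter (fun μ' => ∀ m' ∈ M, bregman f v μ' ≤ bregman f v m')

lemma bestSet_nonempty (f : ℝ → ℝ) {M : Finset ℝ} (hM : M.Nonempty) (v : ℝ) :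
    (bestSet f M v).Nonempty := by
  obtain ⟨b, hb, hopt⟩ := M.exists_min_image (fun μ' => bregman f v μ') hM
  exact ⟨b, Finset.mem_filter.mpr ⟨hb, hopt⟩⟩

noncomputable def best (f : ℝ → ℝ) (M : Finset ℝ) (v : ℝ) : ℝ :=
  if h : (bestSet f M v).Nonempty then (bestSet f M v).min' h else 0

lemma best_spec (f : ℝ → ℝ) {M : Finset ℝ} (hM : M.Nonempty) (v : ℝ) :
    best f M v ∈ M ∧ ∀ m' ∈ M, bregman f v (best f M v) ≤ bregman f v m' := by
  have h := bestSet_nonempty f hM v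
  have : best f M v ∈ bestSet f M v := by
    rw [best, dif_pos h]; exact (bestSet f M v).min'_mem h
  exact Finset.mem_filter.mp this

lemma best_mem (f : ℝ → ℝ) {M : Finset ℝ} (hM : M.Nonempty) (v : ℝ) :
    best f M v ∈ M := (best_spec f hM v).1

lemma best_opt (f : ℝ → ℝ) {M : Finset ℝ} (hM : M.Nonempty) (v : ℝ)
    {m' : ℝ} (hm' : m' ∈ M) : bregman f v (best f M v) ≤ bregman f v m' :=
  (best_spec f hM v).2 m' hm'

lemma best_lt_opt (f : ℝ → ℝ) {M : Finset ℝ} (hM : M.Nonempty) (v : ℝ)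
    {m' : ℝ} (hm' : m' ∈ M) (hlt : m' < best f M v) :
    bregman f v (best f M v) < bregman f v m' := by
  have h := bestSet_nonempty f hM v
  have hnotin : m' ∉ bestSet f M v := by
    intro hin
    have hle := (bestSet f M v).min'_le m' hin
    rw [best, dif_pos h] at hlt
    exact absurd hle (not_le.mpr hlt)
  rw [bestSet, Finset.mem_filter, not_and] at hnotin
  push_neg at hnotin
  obtain ⟨m'', hm'', hstrict⟩ := hnotin hm'
  exact lt_of_le_of_lt (best_opt f hM v hm'') hstrict

lemma best_monotone {f : ℝ → ℝ} (hdiff : Differentiable ℝ f)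
    (hconv : StrictConvexOn ℝ Set.univ f) {M : Finset ℝ} (hM : M.Nonempty)
    {v w : ℝ} (hvw : v ≤ w) : best f M v ≤ best f M w := by
  by_contra hlt
  push_neg at hlt
  set a := best f M v
  set b := best f M w
  have h1 : bregman f v a < bregman f v b :=
    best_lt_opt f hM v (best_mem f hM w) hlt
  have h2 : bregman f w b ≤ bregman f w a :=
    best_opt f hM w (best_mem f hM v)
  have hd : deriv f b < deriv f a := deriv_strictMono' hdiff hconv hlt
  unfold bregman at h1 h2
  nlinarith [mul_nonneg (sub_nonneg.mpr hd.le) (sub_nonneg.mpr hvw)]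

noncomputable def rank (M : Finset ℝ) (m : ℝ) : ℕ := (M.filter (fun y => y < m)).card

lemma rank_lt_card {M : Finset ℝ} {m : ℝ} (hm : m ∈ M) : rank M m < M.card := by
  have hsub : M.filter (fun y => y < m) ⊆ M.erase m := by
    intro y hy
    rw [Finset.mem_filter] at hy
    exact Finset.mem_erase.mpr ⟨ne_of_lt hy.2, hy.1⟩
  calc rank M m ≤ (M.erase m).card := Finset.card_le_card hsub
    _ < M.card := Finset.card_erase_lt_of_mem hm

lemma rank_monotone (M : Finset ℝ) {m m' : ℝ} (h : m ≤ m') : rank M m ≤ rank M m' := by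
  exact Finset.card_le_card (Finset.monotone_filter_right M
    (fun y _ hy => lt_of_lt_of_le hy h))

lemma rank_injOn {M : Finset ℝ} {m m' : ℝ} (hm : m ∈ M) (hm' : m' ∈ M)
    (h : rank M m = rank M m') : m = m' := by
  by_contra hne
  wlog hlt : m < m' generalizing m m'
  · exact this hm' hm h.symm (Ne.symm hne) (lt_of_le_of_ne (not_lt.mp hlt) (Ne.symm hne))
  have hss : M.filter (fun y => y < m) ⊂ M.filter (fun y => y < m') := by
    refine Finset.ssubset_iff_of_subset
      (Finset.monotone_filter_right M (fun y _ hy => lt_trans hy hlt)) |>.mpr ?_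
    exact ⟨m, Finset.mem_filter.mpr ⟨hm, hlt⟩, by simp⟩
  exact absurd h (Nat.ne_of_lt (Finset.card_lt_card hss))

theorem bregman_clustering_eq_interval_partition (f : ℝ → ℝ)
    (hdiff : Differentiable ℝ f) (hconv : StrictConvexOn ℝ Set.univ f)
    (n k : ℕ) (x : ℕ → ℝ)
    (hsort : ∀ ⦃p q : ℕ⦄, 1 ≤ p → p ≤ q → q ≤ n → x p ≤ x q)
    (hk : 1 ≤ k) :
    sInf { c : ℝ | ∃ M : Finset ℝ, M.Nonempty ∧ M.card ≤ k ∧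
        c = ∑ ℓ ∈ Finset.Icc 1 n, sInf ((fun μ => bregman f (x ℓ) μ) '' (M : Set ℝ)) }
      = bregmanKCost f x k n := by
  have h0 : ∀ a b : ℝ, 0 ≤ bregman f a b := bregman_nonneg hdiff hconv
  rw [bregmanKCost]
  set A := { c : ℝ | ∃ M : Finset ℝ, M.Nonempty ∧ M.card ≤ k ∧
      c = ∑ ℓ ∈ Finset.Icc 1 n, sInf ((fun μ => bregman f (x ℓ) μ) '' (M : Set ℝ)) } with hA
  set B := { c : ℝ | ∃ b : ℕ → ℕ, Monotone b ∧ b 0 = 0 ∧ b k = n ∧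
      c = ∑ t ∈ Finset.range k, bregmanClusterCost f x (b t + 1) (b (t + 1)) } with hB
  have hbdd_img : ∀ (v : ℝ) (M : Finset ℝ),
      BddBelow ((fun μ => bregman f v μ) '' (M : Set ℝ)) := by
    intro v M
    exact ⟨0, by rintro y ⟨μ, _, rfl⟩; exact h0 v μ⟩
  have hsInfnn : ∀ (v : ℝ) (M : Finset ℝ), M.Nonempty →
      0 ≤ sInf ((fun μ => bregman f v μ) '' (M : Set ℝ)) := by
    intro v M hM
    refine le_csInf ((Finset.coe_nonempty.mpr hM).image _) ?_
    rintro y ⟨μ, _, rfl⟩; exact h0 v μ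
  have hA0 : ∀ c ∈ A, (0:ℝ) ≤ c := by
    rintro c ⟨M, hM, _, rfl⟩
    exact Finset.sum_nonneg fun ℓ _ => hsInfnn (x ℓ) M hM
  have hB0 : ∀ c ∈ B, (0:ℝ) ≤ c := by
    rintro c ⟨b, _, _, _, rfl⟩
    refine Finset.sum_nonneg fun t _ => Finset.sum_nonneg fun ℓ _ => h0 _ _
  have hAbdd : BddBelow A := ⟨0, hA0⟩
  have hBbdd : BddBelow B := ⟨0, hB0⟩
  have hAne : A.Nonempty :=
    ⟨_, ⟨{0}, Finset.singleton_nonempty 0, by simpa using hk, rfl⟩⟩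
  have hBne : B.Nonempty := by
    refine ⟨_, ⟨fun t => if t = 0 then 0 else n, ?_, if_pos rfl, if_neg (by omega), rfl⟩⟩
    intro s t hst
    dsimp only
    split_ifs <;> omega
  apply le_antisymm
  · -- sInf A ≤ sInf B
    refine le_csInf hBne ?_
    rintro c ⟨b, hbmono, hb0, hbk, rfl⟩
    set M := (Finset.range k).image (fun t =>
      (∑ ℓ ∈ Finset.Icc (b t + 1) (b (t + 1)), x ℓ) /
        ((Finset.Icc (b t + 1) (b (t + 1))).card : ℝ)) with hM
    have hMne : M.Nonempty := Finset.Nonempty.image ⟨0, Finset.mem_range.mpr hk⟩ _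
    have hMcard : M.card ≤ k := Finset.card_image_le.trans (by simp)
    have hmem : (∑ ℓ ∈ Finset.Icc 1 n, sInf ((fun μ => bregman f (x ℓ) μ) '' (M : Set ℝ))) ∈ A :=
      ⟨M, hMne, hMcard, rfl⟩
    refine le_trans (csInf_le hAbdd hmem) ?_
    have key : ∀ t ∈ Finset.range k,
        ∑ ℓ ∈ Finset.Ioc (b t) (b (t + 1)), sInf ((fun μ => bregman f (x ℓ) μ) '' (M : Set ℝ))
          ≤ bregmanClusterCost f x (b t + 1) (b (t + 1)) := by
      intro t ht
      rw [show Finset.Ioc (b t) (b (t + 1)) = Finset.Icc (b t + 1) (b (t + 1)) by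
        ext q; simp only [Finset.mem_Icc, Finset.mem_Ioc]; omega, bregmanClusterCost]
      apply Finset.sum_le_sum
      intro ℓ _
      exact csInf_le (hbdd_img _ _)
        ⟨_, Finset.mem_coe.mpr (Finset.mem_image_of_mem _ ht), rfl⟩
    calc ∑ ℓ ∈ Finset.Icc 1 n, sInf ((fun μ => bregman f (x ℓ) μ) '' (M : Set ℝ))
        = ∑ ℓ ∈ Finset.Ioc (b 0) (b k), sInf ((fun μ => bregman f (x ℓ) μ) '' (M : Set ℝ)) := by
          rw [hb0, hbk, show Finset.Icc 1 n = Finset.Ioc 0 n from by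
            ext q; simp only [Finset.mem_Icc, Finset.mem_Ioc]; omega]
      _ = ∑ t ∈ Finset.range k, ∑ ℓ ∈ Finset.Ioc (b t) (b (t + 1)),
            sInf ((fun μ => bregman f (x ℓ) μ) '' (M : Set ℝ)) :=
          (sum_Ioc_parts _ b hbmono k).symm
      _ ≤ ∑ t ∈ Finset.range k, bregmanClusterCost f x (b t + 1) (b (t + 1)) :=
          Finset.sum_le_sum key
  · -- sInf B ≤ sInf A
    refine le_csInf hAne ?_
    rintro c ⟨M, hMne, hMcard, rfl⟩
    set φ : ℕ → ℕ := fun ℓ => rank M (best f M (x ℓ)) with hφ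
    have hφmono : ∀ p q, 1 ≤ p → p ≤ q → q ≤ n → φ p ≤ φ q := fun p q h1 h2 h3 =>
      rank_monotone M (best_monotone hdiff hconv hMne (hsort h1 h2 h3))
    have hφlt : ∀ ℓ, φ ℓ < k := fun ℓ =>
      lt_of_lt_of_le (rank_lt_card (best_mem f hMne (x ℓ))) hMcard
    set b : ℕ → ℕ := fun t => ((Finset.Icc 1 n).filter (fun ℓ => φ ℓ < t)).card with hbdef
    have hbmono : Monotone b := fun s t hst =>
      Finset.card_le_card (Finset.monotone_filter_right _ (fun ℓ _ h => lt_of_lt_of_le h hst))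
    have hb0 : b 0 = 0 := by simp [hbdef]
    have hbk : b k = n := by
      rw [hbdef]
      dsimp only
      rw [Finset.filter_true_of_mem (fun ℓ _ => hφlt ℓ), Nat.card_Icc]
      omega
    have hble : ∀ t, b t ≤ n := fun t =>
      (Finset.card_filter_le _ _).trans (by simp [Nat.card_Icc])
    have hiff : ∀ t, ∀ ℓ ∈ Finset.Icc 1 n, (ℓ ≤ b t ↔ φ ℓ < t) := by
      intro t ℓ hℓ
      rw [Finset.mem_Icc] at hℓ
      constructor
      · intro hle
        by_contra hnot
        push_neg at hnot
        have hsub : (Finset.Icc 1 n).filter (fun q => φ q < t) ⊆ Finset.Icc 1 (ℓ - 1) := by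
          intro q hq
          rw [Finset.mem_filter, Finset.mem_Icc] at hq
          rw [Finset.mem_Icc]
          refine ⟨hq.1.1, ?_⟩
          by_contra hq2
          push_neg at hq2
          have hlq : ℓ ≤ q := by omega
          exact absurd hq.2 (not_lt.mpr (le_trans hnot (hφmono ℓ q hℓ.1 hlq hq.1.2)))
        have hc := Finset.card_le_card hsub
        rw [Nat.card_Icc] at hc
        have : b t ≤ ℓ - 1 + 1 - 1 := hc
        omega
      · intro hlt
        have hsub : Finset.Icc 1 ℓ ⊆ (Finset.Icc 1 n).filter (fun q => φ q < t) := by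
          intro p hp
          rw [Finset.mem_Icc] at hp
          rw [Finset.mem_filter, Finset.mem_Icc]
          exact ⟨⟨hp.1, le_trans hp.2 hℓ.2⟩,
            lt_of_le_of_lt (hφmono p ℓ hp.1 hp.2 hℓ.2) hlt⟩
        have hc := Finset.card_le_card hsub
        rw [Nat.card_Icc] at hc
        have : ℓ + 1 - 1 ≤ b t := hc
        omega
    have hfiber : ∀ t, ∀ ℓ ∈ Finset.Ioc (b t) (b (t + 1)), φ ℓ = t ∧ ℓ ∈ Finset.Icc 1 n := by
      intro t ℓ hℓ
      rw [Finset.mem_Ioc] at hℓ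
      have hℓIcc : ℓ ∈ Finset.Icc 1 n :=
        Finset.mem_Icc.mpr ⟨by omega, le_trans hℓ.2 (hble (t + 1))⟩
      have h1 := hiff t ℓ hℓIcc
      have h2 := (hiff (t + 1) ℓ hℓIcc).mp hℓ.2
      have h3 : ¬ (φ ℓ < t) := fun hc => absurd (h1.mpr hc) (not_le.mpr hℓ.1)
      exact ⟨by omega, hℓIcc⟩
    have hcost : (∑ t ∈ Finset.range k, bregmanClusterCost f x (b t + 1) (b (t + 1))) ≤
        ∑ ℓ ∈ Finset.Icc 1 n, sInf ((fun μ => bregman f (x ℓ) μ) '' (M : Set ℝ)) := by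
      have hsInfeq : ∀ ℓ ∈ Finset.Icc 1 n,
          sInf ((fun μ => bregman f (x ℓ) μ) '' (M : Set ℝ))
            = bregman f (x ℓ) (best f M (x ℓ)) := by
        intro ℓ _
        refine IsLeast.csInf_eq ⟨⟨best f M (x ℓ), Finset.mem_coe.mpr (best_mem f hMne (x ℓ)), rfl⟩, ?_⟩
        rintro y ⟨μ', hμ', rfl⟩
        exact best_opt f hMne (x ℓ) (Finset.mem_coe.mp hμ')
      rw [Finset.sum_congr rfl hsInfeq]
      rw [show Finset.Icc 1 n = Finset.Ioc 0 n by
        ext q; simp only [Finset.mem_Icc, Finset.mem_Ioc]; omega]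
      rw [← hb0, ← hbk,
        ← sum_Ioc_parts (fun ℓ => bregman f (x ℓ) (best f M (x ℓ))) b hbmono k]
      apply Finset.sum_le_sum
      intro t _
      rcases Finset.eq_empty_or_nonempty (Finset.Ioc (b t) (b (t + 1))) with he | hne
      · rw [he]
        rw [bregmanClusterCost]
        have hIccE : Finset.Icc (b t + 1) (b (t + 1)) = ∅ := by
          rw [show Finset.Icc (b t + 1) (b (t + 1)) = Finset.Ioc (b t) (b (t + 1)) by
            ext q; simp only [Finset.mem_Icc, Finset.mem_Ioc]; omega, he]
        simp [hIccE]
      · have hbt : b t < b (t + 1) := by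
          obtain ⟨q, hq⟩ := hne
          rw [Finset.mem_Ioc] at hq
          omega
        have hrmem : b t + 1 ∈ Finset.Ioc (b t) (b (t + 1)) :=
          Finset.mem_Ioc.mpr ⟨by omega, hbt⟩
        have hrep : ∀ ℓ ∈ Finset.Ioc (b t) (b (t + 1)),
            best f M (x ℓ) = best f M (x (b t + 1)) := by
          intro ℓ hℓ
          have h1 := hfiber t ℓ hℓ
          have h2 := hfiber t _ hrmem
          exact rank_injOn (best_mem f hMne _) (best_mem f hMne _) (h1.1.trans h2.1.symm)
        calc bregmanClusterCost f x (b t + 1) (b (t + 1))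
            ≤ ∑ ℓ ∈ Finset.Icc (b t + 1) (b (t + 1)),
                bregman f (x ℓ) (best f M (x (b t + 1))) := clusterCost_le h0 x _ _ _
          _ = ∑ ℓ ∈ Finset.Ioc (b t) (b (t + 1)),
                bregman f (x ℓ) (best f M (x ℓ)) := by
              rw [show Finset.Icc (b t + 1) (b (t + 1)) = Finset.Ioc (b t) (b (t + 1)) by
                ext q; simp only [Finset.mem_Icc, Finset.mem_Ioc]; omega]
              exact Finset.sum_congr rfl (fun ℓ hℓ => by rw [hrep ℓ hℓ])
    exact le_trans (csInf_le hBbdd ⟨b, hbmono, hb0, hbk, rfl⟩) hcost
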